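/- Let M be a Riemannian manifold satisfying the reduced extended weakly symmetric equation (3.1). Substituting into the second Bianchi identity (∇_{X₅}R)(X₁,X₂,X₃,X₄) + (∇_{X₁}R)(X₂,X₅,X₃,X₄) + (∇_{X₂}R)(X₅,X₁,X₃,X₄) = 0 yields: ω(X₅)G(X₁,X₂,X₃,X₄) + ω(X₂)G(X₅,X₁,X₃,X₄) + ω(X₁)G(X₂,X₅,X₃,X₄) + δ(X₅)H(X₁,X₂,X₃,X₄) + δ(X₂)H(X₅,X₁,X₃,X₄) + δ(X₁)H(X₂,X₅,X₃,X₄) + J(X₅)R(X₁,X₂,X₃,X₄) + J(X₂)R(X₅,X₁,X₃,X₄) + J(X₁)R(X₂,X₅,X₃,X₄) = 0, where J = A - 2B, δ = α - 2β, ω = θ - 2φ. -/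

import Mathlib

noncomputable section

/-- The wedge product of two (0,2)-tensors used in the paper. -/
def wedge {V : Type*} (q p : V → V → ℝ) (x1 x2 x3 x4 : V) : ℝ :=
  q x1 x4 * p x2 x3 - q x1 x3 * p x2 x4 + p x1 x4 * q x2 x3 - p x1 x3 * q x2 x4

variable {V : Type*} [NormedAddCommGroup V] [InnerProductSpace ℝ V] [FiniteDimensional ℝ V]

/-- The metric, as a real-valued bilinear function. -/
def gf (x y : V) : ℝ := inner ℝ x y

/-- The symmetries of a generalized (algebraic) curvature tensor. -/
def IsACT (R : V →ₗ[ℝ] V →ₗ[ℝ] V →ₗ[ℝ] V →ₗ[ℝ] ℝ) : Prop :=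
  (∀ a b c d, R a b c d = - R b a c d) ∧
  (∀ a b c d, R a b c d = - R a b d c) ∧
  (∀ a b c d, R a b c d = R c d a b) ∧
  (∀ a b c d, R a b c d + R b c a d + R c a b d = 0)

/-- Ricci tensor: metric contraction of `R` over the first and fourth arguments. -/
def ricci (R : V →ₗ[ℝ] V →ₗ[ℝ] V →ₗ[ℝ] V →ₗ[ℝ] ℝ) (x y : V) : ℝ :=
  ∑ i, R (stdOrthonormalBasis ℝ V i) x y (stdOrthonormalBasis ℝ V i)

/-- Scalar curvature: trace of the Ricci tensor. -/
def scal (R : V →ₗ[ℝ] V →ₗ[ℝ] V →ₗ[ℝ] V →ₗ[ℝ] ℝ) : ℝ :=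
  ∑ i, ricci R (stdOrthonormalBasis ℝ V i) (stdOrthonormalBasis ℝ V i)

/-- Ricci operator `L`, characterized by `g(L x, y) = S(x, y)`. -/
def ricOp (R : V →ₗ[ℝ] V →ₗ[ℝ] V →ₗ[ℝ] V →ₗ[ℝ] ℝ) (x : V) : V :=
  ∑ i, ricci R x (stdOrthonormalBasis ℝ V i) • stdOrthonormalBasis ℝ V i

/-- Curvature operator: `g(R(x,y)z, w) = R(x,y,z,w)`. -/
def curvOp (R : V →ₗ[ℝ] V →ₗ[ℝ] V →ₗ[ℝ] V →ₗ[ℝ] ℝ) (x y z : V) : V :=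
  ∑ i, R x y z (stdOrthonormalBasis ℝ V i) • stdOrthonormalBasis ℝ V i

/-- Metric dual vector field of a 1-form. -/
def dualVec (A : V →ₗ[ℝ] ℝ) : V :=
  ∑ i, A (stdOrthonormalBasis ℝ V i) • stdOrthonormalBasis ℝ V i


lemma wedge_antisym1 {V : Type*} (q p : V → V → ℝ) (x1 x2 x3 x4 : V) :
    wedge q p x2 x1 x3 x4 = - wedge q p x1 x2 x3 x4 := by
  unfold wedge; ring

lemma wedge_antisym2 {V : Type*} (q p : V → V → ℝ) (x1 x2 x3 x4 : V) :
    wedge q p x1 x2 x4 x3 = - wedge q p x1 x2 x3 x4 := by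
  unfold wedge; ring

lemma wedge_bianchi {V : Type*} (q p : V → V → ℝ)
    (hq : ∀ a b, q a b = q b a) (hp : ∀ a b, p a b = p b a) (x1 x2 x3 x4 : V) :
    wedge q p x1 x2 x3 x4 + wedge q p x2 x3 x1 x4 + wedge q p x3 x1 x2 x4 = 0 := by
  unfold wedge
  rw [hq x3 x1, hp x3 x1, hq x2 x1, hp x2 x1, hq x3 x2, hp x3 x2]
  ring

lemma gf_symm {V : Type*} [NormedAddCommGroup V] [InnerProductSpace ℝ V]
    (a b : V) : gf a b = gf (V := V) b a := real_inner_comm b a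

lemma ricci_symm {V : Type*} [NormedAddCommGroup V] [InnerProductSpace ℝ V]
    [FiniteDimensional ℝ V]
    (R : V →ₗ[ℝ] V →ₗ[ℝ] V →ₗ[ℝ] V →ₗ[ℝ] ℝ) (hR : IsACT R) (x y : V) :
    ricci R x y = ricci R y x := by
  obtain ⟨h1, h2, h3, h4⟩ := hR
  unfold ricci
  refine Finset.sum_congr rfl fun i _ => ?_
  set e := stdOrthonormalBasis ℝ V i
  rw [h3 e x y e, h1 y e e x, h2 e y e x]
  ring

/-- Substituting the reduced extended weakly symmetric equation (3.1) into the second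
Bianchi identity yields the identity (3.4) with `J = A-2B`, `δ = α-2β`, `ω = θ-2φ`
(using the equalities `D = B`, `γ = β`, `ψ = φ`). -/
theorem extended_ws_second_bianchi
    (R : V →ₗ[ℝ] V →ₗ[ℝ] V →ₗ[ℝ] V →ₗ[ℝ] ℝ) (hR : IsACT R)
    (dR : V →ₗ[ℝ] V →ₗ[ℝ] V →ₗ[ℝ] V →ₗ[ℝ] V →ₗ[ℝ] ℝ)
    (hBianchi : ∀ x1 x2 x3 x4 x5 : V,
      dR x5 x1 x2 x3 x4 + dR x1 x2 x5 x3 x4 + dR x2 x5 x1 x3 x4 = 0)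
    (A B D al be ga th ph ps : V →ₗ[ℝ] ℝ)
    (hEWS : ∀ x1 x2 x3 x4 x5 : V,
      dR x5 x1 x2 x3 x4 =
        A x5 * R x1 x2 x3 x4 + B x1 * R x5 x2 x3 x4 + B x2 * R x1 x5 x3 x4
          + D x3 * R x1 x2 x5 x4 + D x4 * R x1 x2 x3 x5
          + al x5 * wedge gf (ricci R) x1 x2 x3 x4
          + be x1 * wedge gf (ricci R) x5 x2 x3 x4
          + be x2 * wedge gf (ricci R) x1 x5 x3 x4
          + ga x3 * wedge gf (ricci R) x1 x2 x5 x4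
          + ga x4 * wedge gf (ricci R) x1 x2 x3 x5
          + th x5 * wedge gf gf x1 x2 x3 x4
          + ph x1 * wedge gf gf x5 x2 x3 x4
          + ph x2 * wedge gf gf x1 x5 x3 x4
          + ps x3 * wedge gf gf x1 x2 x5 x4
          + ps x4 * wedge gf gf x1 x2 x3 x5)
    (hDB : D = B) (hgabe : ga = be) (hpsph : ps = ph) :
    ∀ x1 x2 x3 x4 x5 : V,
      (th x5 - 2 * ph x5) * wedge gf gf x1 x2 x3 x4
        + (th x2 - 2 * ph x2) * wedge gf gf x5 x1 x3 x4
        + (th x1 - 2 * ph x1) * wedge gf gf x2 x5 x3 x4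
        + (al x5 - 2 * be x5) * wedge gf (ricci R) x1 x2 x3 x4
        + (al x2 - 2 * be x2) * wedge gf (ricci R) x5 x1 x3 x4
        + (al x1 - 2 * be x1) * wedge gf (ricci R) x2 x5 x3 x4
        + (A x5 - 2 * B x5) * R x1 x2 x3 x4
        + (A x2 - 2 * B x2) * R x5 x1 x3 x4
        + (A x1 - 2 * B x1) * R x2 x5 x3 x4 = 0 := by
  obtain ⟨h1, h2, h3, h4⟩ := hR
  rw [hDB, hgabe, hpsph] at hEWS
  intro x1 x2 x3 x4 x5
  have e1 := hEWS x1 x2 x3 x4 x5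
  have e2 := hEWS x2 x5 x3 x4 x1
  have e3 := hEWS x5 x1 x3 x4 x2
  have hB := hBianchi x1 x2 x3 x4 x5
  rw [e1, e2, e3] at hB
  have hS := ricci_symm R ⟨h1, h2, h3, h4⟩
  have wbS := wedge_bianchi gf (ricci R) gf_symm hS
  have wbG := wedge_bianchi (V := V) gf gf gf_symm gf_symm
  set_option maxHeartbeats 1000000 in
  linear_combination hB
    + (-2 * B x1) * h1 x2 x5 x3 x4
    + (-2 * B x2) * h1 x5 x1 x3 x4
    + (-2 * B x5) * h1 x1 x2 x3 x4
    - B x3 * h4 x1 x2 x5 x4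
    - B x4 * (h2 x1 x2 x3 x5 + h2 x2 x5 x3 x1 + h2 x5 x1 x3 x2)
    + B x4 * h4 x1 x2 x5 x3
    + (-2 * be x1) * wedge_antisym1 gf (ricci R) x5 x2 x3 x4
    + (-2 * be x2) * wedge_antisym1 gf (ricci R) x1 x5 x3 x4
    + (-2 * be x5) * wedge_antisym1 gf (ricci R) x2 x1 x3 x4
    - be x3 * wbS x1 x2 x5 x4
    - be x4 * (wedge_antisym2 gf (ricci R) x1 x2 x5 x3 + wedge_antisym2 gf (ricci R) x2 x5 x1 x3 + wedge_antisym2 gf (ricci R) x5 x1 x2 x3)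
    + be x4 * wbS x1 x2 x5 x3
    + (-2 * ph x1) * wedge_antisym1 gf gf x5 x2 x3 x4
    + (-2 * ph x2) * wedge_antisym1 gf gf x1 x5 x3 x4
    + (-2 * ph x5) * wedge_antisym1 gf gf x2 x1 x3 x4
    - ph x3 * wbG x1 x2 x5 x4
    - ph x4 * (wedge_antisym2 (V := V) gf gf x1 x2 x5 x3 + wedge_antisym2 (V := V) gf gf x2 x5 x1 x3 + wedge_antisym2 (V := V) gf gf x5 x1 x2 x3)
    + ph x4 * wbG x1 x2 x5 x3
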